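/- Let X = {X(t)}_{t∈ℝ^d} be a jointly measurable random field with values in ℝ^m satisfying the scaling relation {X(Ut)} =_fd {V X(t)} for contracting invertible matrices U, V. Then its occupation measure τ_X, restricted to product Borel sets, satisfies the distributional self-affinity τ_X(A × B) =_d (det U) · τ_X(U⁻¹(A) × V⁻¹(B)) for all Borel sets A ⊆ ℝ^d and B ⊆ ℝ^m. -/

import Mathlib

open MeasureTheory Set
open scoped ENNReal NNReal

set_option maxHeartbeats 1000000
set_option synthInstance.maxHeartbeats 1000000

lemma aux_integrable_bdd {μ : Measure ℝ} [IsFiniteMeasure μ] {g : ℝ → ℝ} {M : ℝ}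
    (hg : AEStronglyMeasurable g μ) (hb : ∀ᵐ x ∂μ, ‖g x‖ ≤ M) : Integrable g μ :=
  Integrable.mono' (integrable_const M) hg hb

lemma aux_absdiff {μ : Measure ℝ} [IsProbabilityMeasure μ] (f g : ℝ → ℝ)
    (hf : Integrable f μ) (hg : Integrable g μ) (ε : ℝ) (hb : ∀ x, ‖f x - g x‖ ≤ ε) :
    |∫ x, f x ∂μ - ∫ x, g x ∂μ| ≤ ε := by
  rw [← integral_sub hf hg, ← Real.norm_eq_abs]
  calc ‖∫ x, (f x - g x) ∂μ‖ ≤ ε * (μ Set.univ).toReal :=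
        norm_integral_le_of_norm_le_const (ae_of_all _ hb)
    _ = ε := by simp

lemma aux_momdet (μ ν : Measure ℝ) [IsProbabilityMeasure μ] [IsProbabilityMeasure ν]
    (C : ℝ) (hC : 0 ≤ C) (hμ : μ (Set.Icc 0 C)ᶜ = 0) (hν : ν (Set.Icc 0 C)ᶜ = 0)
    (h : ∀ n : ℕ, ∫ x, x ^ n ∂μ = ∫ x, x ^ n ∂ν) : μ = ν := by
  have haeμ : ∀ᵐ x ∂μ, x ∈ Set.Icc 0 C := by rw [ae_iff]; convert hμ using 2; rfl
  have haeν : ∀ᵐ x ∂ν, x ∈ Set.Icc 0 C := by rw [ae_iff]; convert hν using 2; rfl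
  -- integrability of powers
  have hint : ∀ (κ : Measure ℝ) (_ : IsProbabilityMeasure κ) (_ : ∀ᵐ x ∂κ, x ∈ Set.Icc 0 C)
      (n : ℕ), Integrable (fun x => x ^ n) κ := by
    intro κ hκ hae n
    refine aux_integrable_bdd (M := (max 1 C) ^ n)
      (Continuous.aestronglyMeasurable (by continuity)) ?_
    filter_upwards [hae] with x hx
    have h1 : |x| ≤ max 1 C := by
      rw [abs_of_nonneg hx.1]; exact le_max_of_le_right hx.2
    calc ‖x ^ n‖ = |x| ^ n := by rw [Real.norm_eq_abs, abs_pow]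
      _ ≤ (max 1 C) ^ n := pow_le_pow_left₀ (abs_nonneg x) h1 n
  -- integral of continuous map composed with projIcc
  have hgint : ∀ (κ : Measure ℝ) (_ : IsProbabilityMeasure κ) (g : C(Set.Icc 0 C, ℝ)),
      Integrable (fun x => g (Set.projIcc 0 C hC x)) κ := by
    intro κ hκ g
    refine aux_integrable_bdd (M := ‖g‖)
      (Continuous.aestronglyMeasurable (g.continuous.comp (continuous_projIcc))) ?_
    exact ae_of_all _ fun x => g.norm_coe_le_norm _
  -- polynomial moments
  have hpoly : ∀ (κ : Measure ℝ) (_ : IsProbabilityMeasure κ) (_ : ∀ᵐ x ∂κ, x ∈ Set.Icc 0 C)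
      (q : Polynomial ℝ), ∫ x, q.eval (Set.projIcc 0 C hC x : ℝ) ∂κ =
        ∑ i ∈ Finset.range (q.natDegree + 1), q.coeff i * ∫ x, x ^ i ∂κ := by
    intro κ hκ hae q
    have h1 : ∫ x, q.eval (Set.projIcc 0 C hC x : ℝ) ∂κ = ∫ x, q.eval x ∂κ := by
      refine integral_congr_ae ?_
      filter_upwards [hae] with x hx
      rw [Set.projIcc_of_mem hC hx]
    rw [h1]
    have h2 : ∀ x : ℝ, q.eval x = ∑ i ∈ Finset.range (q.natDegree + 1), q.coeff i * x ^ i := by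
      intro x; rw [Polynomial.eval_eq_sum_range]
    simp_rw [h2]
    rw [integral_finset_sum _ (fun i _ => (hint κ hκ hae i).const_mul _)]
    exact Finset.sum_congr rfl fun i _ => integral_const_mul _ _
  -- key : equal integrals for all continuous functions on Icc
  have key : ∀ g : C(Set.Icc 0 C, ℝ), ∫ x, g (Set.projIcc 0 C hC x) ∂μ =
      ∫ x, g (Set.projIcc 0 C hC x) ∂ν := by
    intro g
    have hcl : g ∈ closure ((polynomialFunctions (Set.Icc 0 C)) : Set C(Set.Icc 0 C, ℝ)) := by
      have h2 := polynomialFunctions.topologicalClosure (Set.Icc 0 C)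
      have h3 : g ∈ (polynomialFunctions (Set.Icc 0 C)).topologicalClosure := by
        rw [h2]; trivial
      exact h3
    rw [Metric.mem_closure_iff] at hcl
    set D := ∫ x, g (Set.projIcc 0 C hC x) ∂μ - ∫ x, g (Set.projIcc 0 C hC x) ∂ν with hD
    have hεbound : ∀ ε > 0, |D| ≤ 2 * ε := by
      intro ε hε
      obtain ⟨p, hpS, hdist⟩ := hcl ε hε
      rw [SetLike.mem_coe] at hpS
      rw [polynomialFunctions] at hpS
      obtain ⟨q, -, rfl⟩ := hpS
      have hqeval : ∀ k : Set.Icc 0 C, (Polynomial.toContinuousMapOnAlgHom (Set.Icc 0 C) q) k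
          = q.eval (k : ℝ) := fun k => rfl
      have hbound : ∀ (κ : Measure ℝ) (_ : IsProbabilityMeasure κ),
          |∫ x, g (Set.projIcc 0 C hC x) ∂κ -
            ∫ x, q.eval (Set.projIcc 0 C hC x : ℝ) ∂κ| ≤ ε := by
        intro κ hκ
        have := hgint κ hκ (Polynomial.toContinuousMapOnAlgHom (Set.Icc 0 C) q)
        refine aux_absdiff _ _ (hgint κ hκ g) (by simpa [hqeval] using this) ε fun x => ?_
        have h5 : ‖g (Set.projIcc 0 C hC x) -
            (Polynomial.toContinuousMapOnAlgHom (Set.Icc 0 C) q) (Set.projIcc 0 C hC x)‖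
            ≤ dist g (Polynomial.toContinuousMapOnAlgHom (Set.Icc 0 C) q) := by
          rw [← dist_eq_norm]
          exact ContinuousMap.dist_apply_le_dist _
        rw [hqeval] at h5
        exact h5.trans hdist.le
      have heq : ∫ x, q.eval (Set.projIcc 0 C hC x : ℝ) ∂μ
          = ∫ x, q.eval (Set.projIcc 0 C hC x : ℝ) ∂ν := by
        rw [hpoly μ ‹_› haeμ q, hpoly ν ‹_› haeν q]
        exact Finset.sum_congr rfl fun i _ => by rw [h i]
      calc |D| ≤ |∫ x, g (Set.projIcc 0 C hC x) ∂μ - ∫ x, q.eval (Set.projIcc 0 C hC x : ℝ) ∂μ|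
            + |∫ x, q.eval (Set.projIcc 0 C hC x : ℝ) ∂μ - ∫ x, g (Set.projIcc 0 C hC x) ∂ν| := by
              exact abs_sub_le _ _ _
        _ ≤ ε + ε := by
              refine add_le_add (hbound μ ‹_›) ?_
              rw [heq, abs_sub_comm]
              exact hbound ν ‹_›
        _ = 2 * ε := by ring
    have hD0 : D = 0 := by
      by_contra hne
      have h6 := hεbound (|D| / 3) (by positivity)
      have : |D| > 0 := abs_pos.mpr hne
      linarith
    linarith [hD0, abs_nonneg D]
  -- conclude via bounded continuous functions
  apply ext_of_forall_lintegral_eq_of_IsFiniteMeasure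
  intro f
  have hfi : ∀ (κ : Measure ℝ) (_ : IsProbabilityMeasure κ),
      Integrable (fun x => (f x : ℝ)) κ := by
    intro κ hκ
    refine aux_integrable_bdd (M := dist f 0)
      (Continuous.aestronglyMeasurable (NNReal.continuous_coe.comp f.continuous)) ?_
    refine ae_of_all _ fun x => ?_
    have h7 := BoundedContinuousFunction.dist_coe_le_dist (f := f) (g := 0) x
    simp only [BoundedContinuousFunction.coe_zero, Pi.zero_apply] at h7
    rw [Real.norm_eq_abs, abs_of_nonneg (f x).coe_nonneg]
    rw [NNReal.dist_eq, NNReal.coe_zero, sub_zero, abs_of_nonneg (f x).coe_nonneg] at h7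
    exact h7
  rw [lintegral_coe_eq_integral f (hfi μ ‹_›), lintegral_coe_eq_integral f (hfi ν ‹_›)]
  congr 1
  set g : C(Set.Icc 0 C, ℝ) := ⟨fun k => (f k : ℝ), NNReal.continuous_coe.comp (f.continuous.comp continuous_subtype_val)⟩ with hg
  have hcongr : ∀ (κ : Measure ℝ) (_ : ∀ᵐ x ∂κ, x ∈ Set.Icc 0 C),
      ∫ x, (f x : ℝ) ∂κ = ∫ x, g (Set.projIcc 0 C hC x) ∂κ := by
    intro κ hae
    refine integral_congr_ae ?_
    filter_upwards [hae] with x hx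
    simp [hg, Set.projIcc_of_mem hC hx]
  rw [hcongr μ haeμ, hcongr ν haeν, key g]

section Core

variable {d m : ℕ} {Ω : Type*} [MeasurableSpace Ω]

local notation "α" => EuclideanSpace ℝ (Fin d)
local notation "β" => EuclideanSpace ℝ (Fin m)

lemma aux_slice_measurable (W : α → Ω → β)
    (hW : Measurable fun q : α × Ω => W q.1 q.2)
    {A : Set α} {B : Set β} (hA : MeasurableSet A) (hB : MeasurableSet B) :
    Measurable fun ω => volume {t : α | t ∈ A ∧ W t ω ∈ B} := by
  have hS : MeasurableSet {q : α × Ω | q.1 ∈ A ∧ W q.1 q.2 ∈ B} :=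
    (hA.preimage measurable_fst).inter (hB.preimage hW)
  exact measurable_measure_prodMk_right hS

lemma aux_moment (P : Measure Ω) [IsProbabilityMeasure P] (W : α → Ω → β)
    (hW : Measurable fun q : α × Ω => W q.1 q.2)
    {A : Set α} {B : Set β} (hA : MeasurableSet A) (hB : MeasurableSet B) (n : ℕ) :
    ∫⁻ ω, (volume {t : α | t ∈ A ∧ W t ω ∈ B}) ^ n ∂P =
      ∫⁻ t : Fin n → α, Set.indicator {t : Fin n → α | ∀ i, t i ∈ A}
        (fun t => (Measure.map (fun ω => fun i => W (t i) ω) P) (Set.univ.pi fun _ => B)) t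
        ∂(Measure.pi fun _ => volume) := by
  set S : Set (α × Ω) := {q | q.1 ∈ A ∧ W q.1 q.2 ∈ B} with hSdef
  have hS : MeasurableSet S := (hA.preimage measurable_fst).inter (hB.preimage hW)
  set E : Set ((Fin n → α) × Ω) := {q | ∀ i, (q.1 i, q.2) ∈ S} with hEdef
  have hE : MeasurableSet E := by
    rw [show E = ⋂ i, (fun q : (Fin n → α) × Ω => (q.1 i, q.2)) ⁻¹' S by
      ext q; simp [hEdef]]
    exact MeasurableSet.iInter fun i =>
      hS.preimage (((measurable_pi_apply i).comp measurable_fst).prodMk measurable_snd)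
  have step1 : ∀ ω, (volume {t : α | t ∈ A ∧ W t ω ∈ B}) ^ n =
      (Measure.pi fun _ : Fin n => volume) {t : Fin n → α | (t, ω) ∈ E} := by
    intro ω
    have h1 : {t : Fin n → α | (t, ω) ∈ E} =
        Set.univ.pi (fun _ : Fin n => {s : α | (s, ω) ∈ S}) := by
      ext t; simp [hEdef, Set.mem_univ_pi]
    rw [h1, Measure.pi_pi]
    simp [Finset.prod_const, hSdef]
  simp_rw [step1]
  have step2 : ∫⁻ ω, (Measure.pi fun _ : Fin n => volume) {t : Fin n → α | (t, ω) ∈ E} ∂P =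
      ((Measure.pi fun _ : Fin n => volume).prod P) E := (Measure.prod_apply_symm hE).symm
  rw [step2, Measure.prod_apply hE]
  refine lintegral_congr fun t => ?_
  have hmeast : Measurable fun ω => (fun i => W (t i) ω) :=
    measurable_pi_lambda _ fun i => hW.comp (measurable_const.prodMk measurable_id)
  by_cases hcase : ∀ i, t i ∈ A
  · rw [Set.indicator_of_mem (by exact hcase)]
    have h2 : Prod.mk t ⁻¹' E = (fun ω => fun i => W (t i) ω) ⁻¹' (Set.univ.pi fun _ => B) := by
      ext ω
      simp only [Set.mem_preimage, Set.mem_univ_pi, hEdef, Set.mem_setOf_eq, hSdef]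
      exact ⟨fun h i => (h i).2, fun h i => ⟨hcase i, h i⟩⟩
    rw [h2, Measure.map_apply hmeast (MeasurableSet.univ_pi fun _ => hB)]
  · rw [Set.indicator_of_notMem (by exact hcase)]
    push_neg at hcase
    obtain ⟨i0, hi0⟩ := hcase
    have h3 : Prod.mk t ⁻¹' E = ∅ := by
      ext ω
      simp only [Set.mem_preimage, Set.mem_empty_iff_false, iff_false, hEdef, Set.mem_setOf_eq,
        hSdef]
      intro h; exact hi0 (h i0).1
    rw [h3, measure_empty]

end Core

section Core2

variable {d m : ℕ} {Ω : Type*} [MeasurableSpace Ω]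

local notation "α" => EuclideanSpace ℝ (Fin d)
local notation "β" => EuclideanSpace ℝ (Fin m)

lemma aux_occ_law_bdd (P : Measure Ω) [IsProbabilityMeasure P] (Y Z : α → Ω → β)
    (hY : Measurable fun q : α × Ω => Y q.1 q.2)
    (hZ : Measurable fun q : α × Ω => Z q.1 q.2)
    (hfdd : ∀ (n : ℕ) (t : Fin n → α),
      Measure.map (fun ω => fun i => Y (t i) ω) P = Measure.map (fun ω => fun i => Z (t i) ω) P)
    {A : Set α} {B : Set β} (hA : MeasurableSet A) (hB : MeasurableSet B)
    (hfin : volume A ≠ ⊤) :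
    Measure.map (fun ω => volume {t : α | t ∈ A ∧ Y t ω ∈ B}) P =
      Measure.map (fun ω => volume {t : α | t ∈ A ∧ Z t ω ∈ B}) P := by
  set σY : Ω → ℝ≥0∞ := fun ω => volume {t : α | t ∈ A ∧ Y t ω ∈ B} with hσY
  set σZ : Ω → ℝ≥0∞ := fun ω => volume {t : α | t ∈ A ∧ Z t ω ∈ B} with hσZ
  have hmY : Measurable σY := aux_slice_measurable Y hY hA hB
  have hmZ : Measurable σZ := aux_slice_measurable Z hZ hA hB
  have hleY : ∀ ω, σY ω ≤ volume A := fun ω => measure_mono (fun t ht => ht.1)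
  have hleZ : ∀ ω, σZ ω ≤ volume A := fun ω => measure_mono (fun t ht => ht.1)
  have hneY : ∀ ω, σY ω ≠ ⊤ := fun ω => ne_top_of_le_ne_top hfin (hleY ω)
  have hneZ : ∀ ω, σZ ω ≠ ⊤ := fun ω => ne_top_of_le_ne_top hfin (hleZ ω)
  set ρY : Ω → ℝ := fun ω => (σY ω).toReal with hρY
  set ρZ : Ω → ℝ := fun ω => (σZ ω).toReal with hρZ
  have hmρY : Measurable ρY := hmY.ennreal_toReal
  have hmρZ : Measurable ρZ := hmZ.ennreal_toReal
  set C : ℝ := (volume A).toReal with hCdef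
  -- moments of lifted real variables agree
  have hmom : ∀ n : ℕ, ∫ x, x ^ n ∂(Measure.map ρY P) = ∫ x, x ^ n ∂(Measure.map ρZ P) := by
    intro n
    have hlin : ∫⁻ ω, (σY ω) ^ n ∂P = ∫⁻ ω, (σZ ω) ^ n ∂P := by
      rw [aux_moment P Y hY hA hB n, aux_moment P Z hZ hA hB n]
      refine lintegral_congr fun t => ?_
      unfold Set.indicator
      split
      · dsimp only; rw [hfdd n t]
      · rfl
    have hI : ∀ (W : Ω → ℝ≥0∞) (hW : Measurable W) (hne : ∀ ω, W ω ≠ ⊤),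
        ∫ x, x ^ n ∂(Measure.map (fun ω => (W ω).toReal) P) =
          (∫⁻ ω, (W ω) ^ n ∂P).toReal := by
      intro W hW hne
      have hg : AEStronglyMeasurable (fun x : ℝ => x ^ n)
          (Measure.map (fun ω => (W ω).toReal) P) := (continuous_pow n).aestronglyMeasurable
      rw [integral_map hW.ennreal_toReal.aemeasurable hg]
      have h1 : (fun ω => (W ω).toReal ^ n) = fun ω => ((W ω) ^ n).toReal := by
        funext ω; rw [ENNReal.toReal_pow]
      rw [h1]
      exact integral_toReal ((hW.pow_const n).aemeasurable)
        (ae_of_all _ fun ω => ENNReal.pow_lt_top (lt_top_iff_ne_top.mpr (hne ω)))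
    rw [hI σY hmY hneY, hI σZ hmZ hneZ, hlin]
  have hprobY : IsProbabilityMeasure (Measure.map ρY P) :=
    Measure.isProbabilityMeasure_map hmρY.aemeasurable
  have hprobZ : IsProbabilityMeasure (Measure.map ρZ P) :=
    Measure.isProbabilityMeasure_map hmρZ.aemeasurable
  have hsupp : ∀ (W : Ω → ℝ≥0∞) (hW : Measurable W) (hle : ∀ ω, W ω ≤ volume A),
      (Measure.map (fun ω => (W ω).toReal) P) (Set.Icc 0 C)ᶜ = 0 := by
    intro W hW hle
    rw [Measure.map_apply hW.ennreal_toReal measurableSet_Icc.compl]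
    have : (fun ω => (W ω).toReal) ⁻¹' (Set.Icc 0 C)ᶜ = ∅ := by
      ext ω
      simp only [Set.mem_preimage, Set.mem_compl_iff, Set.mem_Icc, Set.mem_empty_iff_false,
        iff_false, not_not, not_and, not_le]
      push_neg
      exact ⟨ENNReal.toReal_nonneg, ENNReal.toReal_mono hfin (hle ω)⟩
    rw [this, measure_empty]
  have hmapeq : Measure.map ρY P = Measure.map ρZ P :=
    aux_momdet _ _ C ENNReal.toReal_nonneg (hsupp σY hmY hleY) (hsupp σZ hmZ hleZ) hmom
  have hcomp : ∀ (W : Ω → ℝ≥0∞) (hW : Measurable W) (hne : ∀ ω, W ω ≠ ⊤),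
      Measure.map W P = Measure.map ENNReal.ofReal (Measure.map (fun ω => (W ω).toReal) P) := by
    intro W hW hne
    rw [Measure.map_map ENNReal.measurable_ofReal hW.ennreal_toReal]
    congr 1
    funext ω
    exact (ENNReal.ofReal_toReal (hne ω)).symm
  rw [hcomp σY hmY hneY, hcomp σZ hmZ hneZ, hmapeq]

end Core2

section Core3

variable {d m : ℕ} {Ω : Type*} [MeasurableSpace Ω]

local notation "α" => EuclideanSpace ℝ (Fin d)
local notation "β" => EuclideanSpace ℝ (Fin m)

lemma aux_occ_law (P : Measure Ω) [IsProbabilityMeasure P] (Y Z : α → Ω → β)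
    (hY : Measurable fun q : α × Ω => Y q.1 q.2)
    (hZ : Measurable fun q : α × Ω => Z q.1 q.2)
    (hfdd : ∀ (n : ℕ) (t : Fin n → α),
      Measure.map (fun ω => fun i => Y (t i) ω) P = Measure.map (fun ω => fun i => Z (t i) ω) P)
    {A : Set α} {B : Set β} (hA : MeasurableSet A) (hB : MeasurableSet B) :
    Measure.map (fun ω => volume {t : α | t ∈ A ∧ Y t ω ∈ B}) P =
      Measure.map (fun ω => volume {t : α | t ∈ A ∧ Z t ω ∈ B}) P := by
  set Ak : ℕ → Set α := fun k => A ∩ Metric.closedBall 0 k with hAk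
  have hAkm : ∀ k, MeasurableSet (Ak k) := fun k => hA.inter measurableSet_closedBall
  have hAkfin : ∀ k, volume (Ak k) ≠ ⊤ := fun k =>
    ne_top_of_le_ne_top ((isCompact_closedBall (0 : α) k).measure_lt_top).ne
      (measure_mono Set.inter_subset_right)
  have hmono : ∀ (W : α → Ω → β) (ω : Ω),
      Monotone fun k => {t : α | t ∈ Ak k ∧ W t ω ∈ B} := by
    intro W ω k l hkl t ht
    exact ⟨⟨ht.1.1, Metric.closedBall_subset_closedBall (Nat.cast_le.mpr hkl) ht.1.2⟩, ht.2⟩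
  have hunion : ∀ (W : α → Ω → β) (ω : Ω),
      (⋃ k, {t : α | t ∈ Ak k ∧ W t ω ∈ B}) = {t : α | t ∈ A ∧ W t ω ∈ B} := by
    intro W ω
    ext t
    simp only [Set.mem_iUnion, Set.mem_setOf_eq, hAk, Set.mem_inter_iff]
    constructor
    · rintro ⟨k, ⟨⟨h1, -⟩, h2⟩⟩; exact ⟨h1, h2⟩
    · rintro ⟨h1, h2⟩
      obtain ⟨k, hk⟩ := exists_nat_ge ‖t‖
      exact ⟨k, ⟨h1, by simpa [Metric.mem_closedBall, dist_zero_right] using hk⟩, h2⟩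
  have hsup : ∀ (W : α → Ω → β) (ω : Ω),
      volume {t : α | t ∈ A ∧ W t ω ∈ B} = ⨆ k, volume {t : α | t ∈ Ak k ∧ W t ω ∈ B} := by
    intro W ω
    rw [← hunion W ω]
    exact Directed.measure_iUnion ((hmono W ω).directed_le)
  have hmY : Measurable fun ω => volume {t : α | t ∈ A ∧ Y t ω ∈ B} :=
    aux_slice_measurable Y hY hA hB
  have hmZ : Measurable fun ω => volume {t : α | t ∈ A ∧ Z t ω ∈ B} :=
    aux_slice_measurable Z hZ hA hB
  have hmYk : ∀ k, Measurable fun ω => volume {t : α | t ∈ Ak k ∧ Y t ω ∈ B} :=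
    fun k => aux_slice_measurable Y hY (hAkm k) hB
  have hmZk : ∀ k, Measurable fun ω => volume {t : α | t ∈ Ak k ∧ Z t ω ∈ B} :=
    fun k => aux_slice_measurable Z hZ (hAkm k) hB
  -- tail probabilities agree
  have htail : ∀ x : ℝ≥0∞,
      Measure.map (fun ω => volume {t : α | t ∈ A ∧ Y t ω ∈ B}) P (Ioi x) =
        Measure.map (fun ω => volume {t : α | t ∈ A ∧ Z t ω ∈ B}) P (Ioi x) := by
    intro x
    rw [Measure.map_apply hmY measurableSet_Ioi, Measure.map_apply hmZ measurableSet_Ioi]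
    have hpre : ∀ (W : α → Ω → β) (_ : Measurable fun q : α × Ω => W q.1 q.2),
        (fun ω => volume {t : α | t ∈ A ∧ W t ω ∈ B}) ⁻¹' Ioi x =
          ⋃ k, (fun ω => volume {t : α | t ∈ Ak k ∧ W t ω ∈ B}) ⁻¹' Ioi x := by
      intro W hW
      ext ω
      simp only [Set.mem_preimage, Set.mem_Ioi, Set.mem_iUnion, hsup W ω, lt_iSup_iff]
    rw [hpre Y hY, hpre Z hZ]
    have hdirY : Directed (· ⊆ ·) fun k =>
        (fun ω => volume {t : α | t ∈ Ak k ∧ Y t ω ∈ B}) ⁻¹' Ioi x := by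
      refine Monotone.directed_le fun k l hkl ω hω => ?_
      exact lt_of_lt_of_le hω (measure_mono (hmono Y ω hkl))
    have hdirZ : Directed (· ⊆ ·) fun k =>
        (fun ω => volume {t : α | t ∈ Ak k ∧ Z t ω ∈ B}) ⁻¹' Ioi x := by
      refine Monotone.directed_le fun k l hkl ω hω => ?_
      exact lt_of_lt_of_le hω (measure_mono (hmono Z ω hkl))
    rw [Directed.measure_iUnion hdirY, Directed.measure_iUnion hdirZ]
    refine iSup_congr fun k => ?_
    rw [← Measure.map_apply (hmYk k) measurableSet_Ioi,
      ← Measure.map_apply (hmZk k) measurableSet_Ioi,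
      aux_occ_law_bdd P Y Z hY hZ hfdd (hAkm k) hB (hAkfin k)]
  -- conclude via Iic
  haveI : IsProbabilityMeasure (Measure.map (fun ω => volume {t : α | t ∈ A ∧ Y t ω ∈ B}) P) :=
    Measure.isProbabilityMeasure_map hmY.aemeasurable
  haveI : IsProbabilityMeasure (Measure.map (fun ω => volume {t : α | t ∈ A ∧ Z t ω ∈ B}) P) :=
    Measure.isProbabilityMeasure_map hmZ.aemeasurable
  refine Measure.ext_of_Iic _ _ fun x => ?_
  have hIic : (Iic x) = (Ioi x)ᶜ := by simp
  rw [hIic, measure_compl measurableSet_Ioi (measure_ne_top _ _),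
    measure_compl measurableSet_Ioi (measure_ne_top _ _), htail x]
  simp

end Core3

/-- If a jointly measurable random field satisfies the scaling relation
`{X(Ut)} =_fd {V X(t)}` for contracting invertible matrices `U, V` (all eigenvalues of
modulus in `(0,1)`), then its occupation measure satisfies the distributional self-affinity
`τ_X(A × B) =_d |det U| · τ_X(U⁻¹(A) × V⁻¹(B))` for all Borel sets `A`, `B`. -/
theorem occupation_measure_self_affine (d m : ℕ) {Ω : Type*} [MeasurableSpace Ω]
    (P : Measure Ω) [IsProbabilityMeasure P]
    (X : EuclideanSpace ℝ (Fin d) → Ω → EuclideanSpace ℝ (Fin m))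
    (hX : Measurable fun q : EuclideanSpace ℝ (Fin d) × Ω => X q.1 q.2)
    (U : Matrix (Fin d) (Fin d) ℝ) (V : Matrix (Fin m) (Fin m) ℝ)
    (hU : IsUnit U.det) (hV : IsUnit V.det)
    (hUcontr : ∀ z ∈ (U.map (algebraMap ℝ ℂ)).charpoly.roots,
      0 < ‖z‖ ∧ ‖z‖ < 1)
    (hVcontr : ∀ z ∈ (V.map (algebraMap ℝ ℂ)).charpoly.roots,
      0 < ‖z‖ ∧ ‖z‖ < 1)
    (hscal : ∀ (n : ℕ) (t : Fin n → EuclideanSpace ℝ (Fin d)),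
      Measure.map (fun ω => fun i => X (Matrix.toEuclideanLin U (t i)) ω) P =
        Measure.map (fun ω => fun i => Matrix.toEuclideanLin V (X (t i) ω)) P) :
    ∀ (A : Set (EuclideanSpace ℝ (Fin d))) (B : Set (EuclideanSpace ℝ (Fin m))),
      MeasurableSet A → MeasurableSet B →
      Measure.map (fun ω => volume {t | t ∈ A ∧ X t ω ∈ B}) P =
        Measure.map (fun ω => ENNReal.ofReal |U.det| *
          volume {t | Matrix.toEuclideanLin U t ∈ A ∧ Matrix.toEuclideanLin V (X t ω) ∈ B}) P := by
  intro A B hA hB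
  set fU : EuclideanSpace ℝ (Fin d) →ₗ[ℝ] EuclideanSpace ℝ (Fin d) := Matrix.toEuclideanLin U
  set fV : EuclideanSpace ℝ (Fin m) →ₗ[ℝ] EuclideanSpace ℝ (Fin m) := Matrix.toEuclideanLin V
  have hdet : LinearMap.det fU = U.det := by
    show LinearMap.det (Matrix.toEuclideanLin U) = U.det
    rw [Matrix.toEuclideanLin_eq_toLin]
    exact LinearMap.det_toLin _ U
  have hdet0 : U.det ≠ 0 := hU.ne_zero
  have mfU : Measurable fU := (LinearMap.continuous_of_finiteDimensional fU).measurable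
  have mfV : Measurable fV := (LinearMap.continuous_of_finiteDimensional fV).measurable
  set Y : EuclideanSpace ℝ (Fin d) → Ω → EuclideanSpace ℝ (Fin m) := fun t ω => X (fU t) ω
  set Z : EuclideanSpace ℝ (Fin d) → Ω → EuclideanSpace ℝ (Fin m) := fun t ω => fV (X t ω)
  have hYm : Measurable fun q : EuclideanSpace ℝ (Fin d) × Ω => Y q.1 q.2 :=
    hX.comp ((mfU.comp measurable_fst).prodMk measurable_snd)
  have hZm : Measurable fun q : EuclideanSpace ℝ (Fin d) × Ω => Z q.1 q.2 := mfV.comp hX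
  have hA' : MeasurableSet (fU ⁻¹' A) := hA.preimage mfU
  have core := aux_occ_law P Y Z hYm hZm (fun n t => hscal n t) hA' hB
  set c : ℝ≥0∞ := ENNReal.ofReal |U.det| with hc
  -- scaling of volume under preimage
  have hvol : ∀ s : Set (EuclideanSpace ℝ (Fin d)), volume s = c * volume (fU ⁻¹' s) := by
    intro s
    rw [MeasureTheory.Measure.addHaar_preimage_linearMap volume (by rw [hdet]; exact hdet0) s,
      hc, hdet, ← mul_assoc, ← ENNReal.ofReal_mul (abs_nonneg _), abs_inv,
      mul_inv_cancel₀ (abs_ne_zero.mpr hdet0)]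
    simp
  have hLHS : (fun ω => volume {t | t ∈ A ∧ X t ω ∈ B}) =
      fun ω => c * volume {t | t ∈ fU ⁻¹' A ∧ Y t ω ∈ B} := by
    funext ω
    rw [hvol {t | t ∈ A ∧ X t ω ∈ B}]
    rfl
  have hRHS : (fun ω => c *
      volume {t | Matrix.toEuclideanLin U t ∈ A ∧ Matrix.toEuclideanLin V (X t ω) ∈ B}) =
      fun ω => c * volume {t | t ∈ fU ⁻¹' A ∧ Z t ω ∈ B} := rfl
  rw [hLHS, hRHS]
  have hmY : Measurable fun ω => volume {t | t ∈ fU ⁻¹' A ∧ Y t ω ∈ B} :=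
    aux_slice_measurable Y hYm hA' hB
  have hmZ : Measurable fun ω => volume {t | t ∈ fU ⁻¹' A ∧ Z t ω ∈ B} :=
    aux_slice_measurable Z hZm hA' hB
  have hgm : Measurable fun x : ℝ≥0∞ => c * x := measurable_id.const_mul c
  rw [show (fun ω => c * volume {t | t ∈ fU ⁻¹' A ∧ Y t ω ∈ B}) =
      (fun x : ℝ≥0∞ => c * x) ∘ (fun ω => volume {t | t ∈ fU ⁻¹' A ∧ Y t ω ∈ B}) from rfl,
    show (fun ω => c * volume {t | t ∈ fU ⁻¹' A ∧ Z t ω ∈ B}) =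
      (fun x : ℝ≥0∞ => c * x) ∘ (fun ω => volume {t | t ∈ fU ⁻¹' A ∧ Z t ω ∈ B}) from rfl,
    ← Measure.map_map hgm hmY, ← Measure.map_map hgm hmZ, core]
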